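/- For all λ, μ ≥ 0, the total variation distance between the Poisson distribution with mean λ and the Poisson distribution with mean μ is at most |λ − μ|. -/
import Mathlib

open Real

/-- Poisson pmf with mean `l` at `k`. -/
noncomputable def poissonPmf (l : ℝ) (k : ℕ) : ℝ :=
  Real.exp (-l) * l ^ k / (Nat.factorial k)

/-- Total variation distance between two distributions on ℕ given by pmfs. -/
noncomputable def tvDist (p q : ℕ → ℝ) : ℝ :=
  (1 / 2) * ∑' k : ℕ, |p k - q k|

lemma tsum_pow_div_factorial (x : ℝ) : ∑' k : ℕ, x ^ k / (Nat.factorial k) = Real.exp x := by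
  rw [Real.exp_eq_exp_ℝ, NormedSpace.exp_eq_tsum_div]

lemma poisson_summable (l : ℝ) : Summable (poissonPmf l) := by
  have := (Real.summable_pow_div_factorial l).mul_left (Real.exp (-l))
  apply this.congr
  intro k
  unfold poissonPmf
  ring

lemma poisson_tsum (l : ℝ) : ∑' k, poissonPmf l k = 1 := by
  simp only [poissonPmf, mul_div_assoc]
  rw [tsum_mul_left, tsum_pow_div_factorial, ← Real.exp_add]
  simp

lemma poisson_nonneg {l : ℝ} (hl : 0 ≤ l) (k : ℕ) : 0 ≤ poissonPmf l k := by
  unfold poissonPmf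
  positivity

lemma key (l m : ℝ) (hl : 0 ≤ l) (hlm : l ≤ m) :
    tvDist (poissonPmf l) (poissonPmf m) ≤ |l - m| := by
  set c : ℝ := Real.exp (l - m) with hc
  have hc1 : c ≤ 1 := by
    rw [hc]; exact Real.exp_le_one_iff.mpr (by linarith)
  have hc0 : 0 < c := Real.exp_pos _
  -- pointwise bound
  have hpt : ∀ k, |poissonPmf l k - poissonPmf m k| ≤
      (poissonPmf m k - c * poissonPmf l k) + (1 - c) * poissonPmf l k := by
    intro k
    have h1 : 0 ≤ poissonPmf m k - c * poissonPmf l k := by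
      have : c * poissonPmf l k = Real.exp (-m) * l ^ k / (Nat.factorial k) := by
        rw [hc]; unfold poissonPmf
        rw [mul_div_assoc, ← mul_assoc, ← Real.exp_add, mul_div_assoc]
        ring_nf
      rw [this]
      unfold poissonPmf
      rw [sub_nonneg]
      gcongr
    have h2 : 0 ≤ (1 - c) * poissonPmf l k :=
      mul_nonneg (by linarith) (poisson_nonneg hl k)
    have heq : poissonPmf m k - poissonPmf l k =
        (poissonPmf m k - c * poissonPmf l k) - (1 - c) * poissonPmf l k := by ring
    rw [abs_sub_comm, heq]
    calc |(poissonPmf m k - c * poissonPmf l k) - (1 - c) * poissonPmf l k|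
        ≤ |poissonPmf m k - c * poissonPmf l k| + |(1 - c) * poissonPmf l k| := abs_sub _ _
      _ = _ := by rw [abs_of_nonneg h1, abs_of_nonneg h2]
  have hsum_r : Summable (fun k => (poissonPmf m k - c * poissonPmf l k) + (1 - c) * poissonPmf l k) :=
    (((poisson_summable m).sub ((poisson_summable l).mul_left c))).add ((poisson_summable l).mul_left (1 - c))
  have habs : Summable (fun k => |poissonPmf l k - poissonPmf m k|) := by
    apply Summable.of_nonneg_of_le (fun k => abs_nonneg _) hpt hsum_r
  have hle : ∑' k, |poissonPmf l k - poissonPmf m k| ≤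
      ∑' k, ((poissonPmf m k - c * poissonPmf l k) + (1 - c) * poissonPmf l k) :=
    Summable.tsum_le_tsum hpt habs hsum_r
  have hrhs : ∑' k, ((poissonPmf m k - c * poissonPmf l k) + (1 - c) * poissonPmf l k) = 2 * (1 - c) := by
    rw [Summable.tsum_add ((poisson_summable m).sub ((poisson_summable l).mul_left c)) ((poisson_summable l).mul_left (1 - c)),
        Summable.tsum_sub (poisson_summable m) ((poisson_summable l).mul_left c),
        tsum_mul_left, tsum_mul_left, poisson_tsum, poisson_tsum]
    ring
  have hfinal : 1 - c ≤ m - l := by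
    have := Real.add_one_le_exp (l - m)
    linarith
  unfold tvDist
  rw [abs_of_nonpos (by linarith)]
  calc (1/2) * ∑' k, |poissonPmf l k - poissonPmf m k|
      ≤ (1/2) * (2 * (1 - c)) := by
        apply mul_le_mul_of_nonneg_left _ (by norm_num)
        rw [← hrhs]; exact hle
    _ = 1 - c := by ring
    _ ≤ -(l - m) := by linarith

theorem stmt0 (l m : ℝ) (hl : 0 ≤ l) (hm : 0 ≤ m) :
    tvDist (poissonPmf l) (poissonPmf m) ≤ |l - m| := by
  rcases le_total l m with h | h
  · exact key l m hl h
  · rw [abs_sub_comm]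
    have : tvDist (poissonPmf l) (poissonPmf m) = tvDist (poissonPmf m) (poissonPmf l) := by
      unfold tvDist
      congr 1
      exact tsum_congr fun k => abs_sub_comm _ _
    rw [this]
    exact key m l hm h
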